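/- Let α be a finite alphabet consisting of exactly two distinct letters a and b. The language L = ⊤·({ba}·{b}∗·({aa}·{b}∗)∗) (where {ba}, {b}, {aa} denote the singleton languages of the words ba, b, aa) is symmetric definite, but L does not have the non-counting property: for every k ≥ 1 there exist words x, y, z such that exactly one of x·y^k·z ∈ L and x·y^{k+1}·z ∈ L holds. -/

import Mathlib

open Language Computability

universe u

variable {α : Type}

/-- The n-fold repetition (power) of a word. -/
def wordPow (y : List α) : ℕ → List α
  | 0 => []
  | n + 1 => y ++ wordPow y n

/-- A star language: the Kleene star of some regular language. -/
def IsStarLang (L : Language α) : Prop :=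
  ∃ H : Language α, H.IsRegular ∧ L = H∗

/-- A left-sided comet. -/
def IsLeftComet (L : Language α) : Prop :=
  ∃ E G : Language α, E.IsRegular ∧ G.IsRegular ∧ G ≠ 0 ∧ G ≠ 1 ∧ L = E * G∗

/-- A right-sided comet. -/
def IsRightComet (L : Language α) : Prop :=
  ∃ G H : Language α, G.IsRegular ∧ H.IsRegular ∧ G ≠ 0 ∧ G ≠ 1 ∧ L = G∗ * H

/-- A two-sided comet. -/
def IsTwoComet (L : Language α) : Prop :=
  ∃ E G H : Language α, E.IsRegular ∧ G.IsRegular ∧ H.IsRegular ∧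
    G ≠ 0 ∧ G ≠ 1 ∧ L = E * G∗ * H

/-- A regular expression is union-free if it is built from the atoms `0` (empty language)
and single letters using only concatenation and Kleene star. -/
def RegularExpression.UnionFree : RegularExpression α → Prop
  | RegularExpression.zero => True
  | RegularExpression.epsilon => False
  | RegularExpression.char _ => True
  | RegularExpression.plus _ _ => False
  | RegularExpression.comp r s => r.UnionFree ∧ s.UnionFree
  | RegularExpression.star r => r.UnionFree

/-- A union-free language: the language of a union-free regular expression. -/
def IsUnionFree (L : Language α) : Prop :=
  ∃ r : RegularExpression α, r.UnionFree ∧ r.matches' = L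

/-- A monoidal language. -/
def IsMonoidal (L : Language α) : Prop := L = (⊤ : Language α)

/-- The language of one-letter words with letters from `X`. -/
def lettersLang (X : Set α) : Language α := {w : List α | ∃ a ∈ X, w = [a]}

/-- A combinational language: `⊤ · X` for a set `X` of one-letter words. -/
def IsCombinational (L : Language α) : Prop :=
  ∃ X : Set α, L = (⊤ : Language α) * lettersLang X

/-- A symmetric definite language: `E · ⊤ · H` with `E, H` regular. -/
def IsSymDef (L : Language α) : Prop :=
  ∃ E H : Language α, E.IsRegular ∧ H.IsRegular ∧ L = E * (⊤ : Language α) * H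

/-- A nilpotent language: finite or with finite complement. -/
def IsNilpotentLang (L : Language α) : Prop := L.Finite ∨ (Lᶜ : Language α).Finite

/-- A definite language: `A ∪ ⊤ · B` with `A, B` finite. -/
def IsDefinite (L : Language α) : Prop :=
  ∃ A B : Language α, A.Finite ∧ B.Finite ∧ L = A + (⊤ : Language α) * B  -- `+` of languages is union

/-- An ordered language: accepted by a DFA with linearly ordered state set
whose transition maps are all monotone. -/
def IsOrdered (L : Language α) : Prop :=
  ∃ (σ : Type) (_ : Fintype σ) (_ : LinearOrder σ) (M : DFA α σ),
    (∀ a : α, Monotone fun q => M.step q a) ∧ M.accepts = L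

/-- The non-counting property. -/
def HasNonCounting (L : Language α) : Prop :=
  ∃ k : ℕ, 1 ≤ k ∧ ∀ x y z : List α,
    (x ++ wordPow y k ++ z ∈ L ↔ x ++ wordPow y (k + 1) ++ z ∈ L)

/-- A non-counting (star-free) regular language. -/
def IsNonCounting (L : Language α) : Prop := L.IsRegular ∧ HasNonCounting L

/-- The power-separating property. -/
def HasPowerSep (L : Language α) : Prop :=
  ∃ m : ℕ, 1 ≤ m ∧ ∀ x : List α,
    (∀ n, m ≤ n → wordPow x n ∉ L) ∨ (∀ n, m ≤ n → wordPow x n ∈ L)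

/-- A power-separating regular language. -/
def IsPowerSep (L : Language α) : Prop := L.IsRegular ∧ HasPowerSep L

/-- A suffix-closed (regular) language. -/
def IsSuffixClosed (L : Language α) : Prop :=
  L.IsRegular ∧ ∀ x y : List α, x ++ y ∈ L → y ∈ L

/-- A circular (regular) language. -/
def IsCircular (L : Language α) : Prop :=
  L.IsRegular ∧ ∀ u v : List α, u ++ v ∈ L → v ++ u ∈ L

/-- A commutative (regular) language. -/
def IsCommutative (L : Language α) : Prop :=
  L.IsRegular ∧ ∀ w ∈ L, ∀ v : List α, w.Perm v → v ∈ L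

/-- The reversal of a language. -/
def Reversal (L : Language α) : Language α := {w : List α | ∃ v ∈ L, w = v.reverse}

/-- Two families of languages are incomparable if neither is contained in the other. -/
def Incomparable (P Q : Language α → Prop) : Prop :=
  (∃ L : Language α, P L ∧ ¬ Q L) ∧ (∃ L : Language α, Q L ∧ ¬ P L)

/-- A finite language. -/
def IsFiniteLang (L : Language α) : Prop := L.Finite

/-- The witness language `⊤ · ({ba}·{b}∗·({aa}·{b}∗)∗)`. -/
def sydefWitness (a b : α) : Language α :=
  (⊤ : Language α) *
    (({[b, a]} : Language α) * ({[b]} : Language α)∗ *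
      (({[a, a]} : Language α) * ({[b]} : Language α)∗)∗)

section Aux

open Classical in
/-- States of the DFA recognizing `{ba}{b}∗({aa}{b}∗)∗`. -/
inductive WSt where
  | s0 | s1 | s2 | dead
  deriving DecidableEq

instance : Fintype WSt := ⟨{.s0, .s1, .s2, .dead}, fun x => by cases x <;> decide⟩

open Classical in
noncomputable def wStep (b : α) : WSt → α → WSt := fun q c =>
  if c = b then
    (match q with | .s0 => .s1 | .s1 => .dead | .s2 => .s2 | .dead => .dead)
  else
    (match q with | .s0 => .dead | .s1 => .s2 | .s2 => .s1 | .dead => .dead)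

noncomputable def wDFA (b : α) : DFA α WSt := ⟨wStep b, .s0, {.s2}⟩

/-- The "tail" language `{b}∗ ({aa}{b}∗)∗`. -/
def Klang (a b : α) : Language α :=
  ({[b]} : Language α)∗ * (({[a, a]} : Language α) * ({[b]} : Language α)∗)∗

lemma nil_mem_Klang (a b : α) : [] ∈ Klang a b :=
  ⟨[], Language.nil_mem_kstar _, [], Language.nil_mem_kstar _, rfl⟩

lemma append_mem_kstar' {l : Language α} {u v : List α}
    (hu : u ∈ l) (hv : v ∈ l∗) : u ++ v ∈ l∗ := by
  rw [Language.mem_kstar] at hv ⊢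
  obtain ⟨L, rfl, hL⟩ := hv
  exact ⟨u :: L, by simp, by
    intro y hy
    rcases List.mem_cons.mp hy with rfl | h
    · exact hu
    · exact hL y h⟩

lemma cons_b_mem_Klang {a b : α} {v : List α} (h : v ∈ Klang a b) :
    b :: v ∈ Klang a b := by
  obtain ⟨s, hs, t, ht, rfl⟩ := h
  exact ⟨[b] ++ s, append_mem_kstar' rfl hs, t, ht, by simp⟩

lemma cons_aa_mem_Klang {a b : α} {v : List α} (h : v ∈ Klang a b) :
    a :: a :: v ∈ Klang a b := by
  obtain ⟨s, hs, t, ht, rfl⟩ := h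
  refine ⟨[], Language.nil_mem_kstar _, ([a, a] ++ s) ++ t,
    append_mem_kstar' (Language.append_mem_mul rfl hs) ht, by simp⟩

lemma wstep_dead {b : α} (c : α) : wStep b WSt.dead c = WSt.dead := by
  simp [wStep]

lemma evalFrom_dead {b : α} (w : List α) :
    (wDFA b).evalFrom WSt.dead w = WSt.dead := by
  induction w with
  | nil => rfl
  | cons c v ih =>
      show (wDFA b).evalFrom ((wDFA b).step WSt.dead c) v = WSt.dead
      simpa [wDFA, wstep_dead] using ih

lemma wstep_b_s0 {a b : α} : wStep b WSt.s0 b = WSt.s1 := by simp [wStep]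
lemma wstep_b_s2 {b : α} : wStep b WSt.s2 b = WSt.s2 := by simp [wStep]
lemma wstep_a_s1 {a b : α} (hab : a ≠ b) : wStep b WSt.s1 a = WSt.s2 := by
  simp [wStep, hab]
lemma wstep_a_s2 {a b : α} (hab : a ≠ b) : wStep b WSt.s2 a = WSt.s1 := by
  simp [wStep, hab]
lemma wstep_a_s0 {a b : α} (hab : a ≠ b) : wStep b WSt.s0 a = WSt.dead := by
  simp [wStep, hab]
lemma wstep_b_s1 {b : α} : wStep b WSt.s1 b = WSt.dead := by simp [wStep]

lemma evalFrom_cons {b : α} (q : WSt) (c : α) (v : List α) :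
    (wDFA b).evalFrom q (c :: v) = (wDFA b).evalFrom (wStep b q c) v := rfl

/-- Backward direction: states classify the words they accept. -/
lemma wDFA_backward {a b : α} (hab : a ≠ b) (hall : ∀ c : α, c = a ∨ c = b) :
    ∀ w : List α, ∀ q : WSt, (wDFA b).evalFrom q w = WSt.s2 →
      (q = WSt.s0 → w ∈ ({[b, a]} : Language α) * Klang a b) ∧
      (q = WSt.s1 → w ∈ ({[a]} : Language α) * Klang a b) ∧
      (q = WSt.s2 → w ∈ Klang a b) := by
  intro w
  induction w with
  | nil =>
      intro q hq
      simp only [DFA.evalFrom_nil] at hq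
      subst hq
      refine ⟨by simp, by simp, fun _ => nil_mem_Klang a b⟩
  | cons c v ih =>
      intro q hq
      rw [evalFrom_cons] at hq
      rcases hall c with rfl | rfl
      · -- c = a
        refine ⟨?_, ?_, ?_⟩ <;> rintro rfl
        · rw [wstep_a_s0 hab] at hq
          rw [evalFrom_dead] at hq
          exact absurd hq (by simp)
        · rw [wstep_a_s1 hab] at hq
          have hv := (ih _ hq).2.2 rfl
          exact ⟨[c], rfl, v, hv, rfl⟩
        · rw [wstep_a_s2 hab] at hq
          obtain ⟨u, hu, v', hv', rfl⟩ := (ih _ hq).2.1 rfl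
          replace hu : u = _ := hu
          subst hu
          exact cons_aa_mem_Klang hv'
      · -- c = b
        refine ⟨?_, ?_, ?_⟩ <;> rintro rfl
        · rw [wstep_b_s0 (a := a)] at hq
          obtain ⟨u, hu, v', hv', rfl⟩ := (ih _ hq).2.1 rfl
          replace hu : u = _ := hu
          subst hu
          exact ⟨[c, a], rfl, v', hv', rfl⟩
        · rw [wstep_b_s1] at hq
          rw [evalFrom_dead] at hq
          exact absurd hq (by simp)
        · rw [wstep_b_s2] at hq
          exact cons_b_mem_Klang ((ih _ hq).2.2 rfl)

lemma evalFrom_bstar {b : α} {s : List α}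
    (hs : s ∈ (({[b]} : Language α))∗) (q : WSt) (hq : wStep b q b = q) :
    (wDFA b).evalFrom q s = q := by
  rw [Language.mem_kstar] at hs
  obtain ⟨L, rfl, hL⟩ := hs
  induction L with
  | nil => rfl
  | cons y L' ih =>
      have hy : y = [b] := hL y (by simp)
      subst hy
      have : ∀ z ∈ L', z ∈ ({[b]} : Language α) := fun z hz => hL z (by simp [hz])
      simpa [List.flatten, evalFrom_cons, wDFA, hq] using ih this

lemma evalFrom_Sstar {a b : α} (hab : a ≠ b) {t : List α}
    (ht : t ∈ ((({[a, a]} : Language α) * ({[b]} : Language α)∗))∗) :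
    (wDFA b).evalFrom WSt.s2 t = WSt.s2 := by
  rw [Language.mem_kstar] at ht
  obtain ⟨L, rfl, hL⟩ := ht
  induction L with
  | nil => rfl
  | cons y L' ih =>
      obtain ⟨u, hu, s, hs, rfl⟩ := hL y (by simp)
      replace hu : u = _ := hu
      subst hu
      have hrec : (wDFA b).evalFrom WSt.s2 L'.flatten = WSt.s2 :=
        ih (fun z hz => hL z (by simp [hz]))
      have : [a, a] ++ s ++ L'.flatten = a :: a :: (s ++ L'.flatten) := by simp
      rw [List.flatten_cons, this, evalFrom_cons, wstep_a_s2 hab, evalFrom_cons,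
        wstep_a_s1 hab, DFA.evalFrom_of_append, evalFrom_bstar hs _ wstep_b_s2, hrec]

/-- The DFA accepts exactly `{ba}{b}∗({aa}{b}∗)∗`. -/
lemma wDFA_accepts {a b : α} (hab : a ≠ b) (hall : ∀ c : α, c = a ∨ c = b) :
    (wDFA b).accepts =
      ({[b, a]} : Language α) * ({[b]} : Language α)∗ *
        (({[a, a]} : Language α) * ({[b]} : Language α)∗)∗ := by
  have hM : ({[b, a]} : Language α) * ({[b]} : Language α)∗ *
      (({[a, a]} : Language α) * ({[b]} : Language α)∗)∗
      = ({[b, a]} : Language α) * Klang a b := mul_assoc _ _ _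
  rw [hM]
  ext w
  rw [DFA.mem_accepts]
  constructor
  · intro hw
    exact (wDFA_backward hab hall w _ hw).1 rfl
  · rintro ⟨u, hu, v, hv, rfl⟩
    replace hu : u = _ := hu
    subst hu
    obtain ⟨s, hs, t, ht, rfl⟩ := hv
    show (wDFA b).evalFrom WSt.s0 ([b, a] ++ (s ++ t)) ∈ _
    have h2 : (wDFA b).evalFrom WSt.s0 ([b, a] ++ (s ++ t))
        = (wDFA b).evalFrom WSt.s2 (s ++ t) := by
      rw [show ([b, a] ++ (s ++ t)) = b :: a :: (s ++ t) by simp, evalFrom_cons,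
        wstep_b_s0 (a := a), evalFrom_cons, wstep_a_s1 hab]
    rw [h2, DFA.evalFrom_of_append, evalFrom_bstar hs _ wstep_b_s2,
      evalFrom_Sstar hab ht]
    rfl

lemma top_regular : (⊤ : Language α).IsRegular :=
  ⟨Unit, inferInstance, ⟨fun _ _ => (), (), Set.univ⟩, by
    ext w; simp [DFA.mem_accepts]; exact trivial⟩

lemma top_mul_top : (⊤ : Language α) * ⊤ = ⊤ := by
  apply le_antisymm le_top
  intro w _
  exact ⟨[], trivial, w, trivial, by simp⟩

lemma wordPow_single (a : α) (n : ℕ) : wordPow [a] n = List.replicate n a := by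
  induction n with
  | zero => rfl
  | succ n ih => simp [wordPow, ih, List.replicate_succ]

lemma evalFrom_replicate {a b : α} (hab : a ≠ b) (n : ℕ) :
    ((wDFA b).evalFrom WSt.s2 (List.replicate n a)
        = if Even n then WSt.s2 else WSt.s1) ∧
    ((wDFA b).evalFrom WSt.s1 (List.replicate n a)
        = if Even n then WSt.s1 else WSt.s2) := by
  induction n with
  | zero => exact ⟨rfl, rfl⟩
  | succ n ih =>
      rw [List.replicate_succ]
      constructor
      · rw [evalFrom_cons, wstep_a_s2 hab, ih.2]
        by_cases h : Even n <;> simp [h, Nat.even_add_one]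
      · rw [evalFrom_cons, wstep_a_s1 hab, ih.1]
        by_cases h : Even n <;> simp [h, Nat.even_add_one]

lemma mem_sydefWitness_iff {a b : α} (hab : a ≠ b) (hall : ∀ c : α, c = a ∨ c = b)
    {k : ℕ} (hk : 1 ≤ k) :
    ([b] ++ List.replicate k a ∈ sydefWitness a b) ↔ Odd k := by
  have hacc := wDFA_accepts hab hall
  constructor
  · rintro ⟨u, -, v, hv, huv⟩
    rw [← hacc] at hv
    replace hv : v ∈ (wDFA b).accepts := hv
    rw [DFA.mem_accepts] at hv
    cases u with
    | nil =>
        have huv' : v = [b] ++ List.replicate k a := huv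
        subst huv'
        have : (wDFA b).eval ([b] ++ List.replicate k a)
            = (wDFA b).evalFrom WSt.s1 (List.replicate k a) := by
          show (wDFA b).evalFrom WSt.s0 (b :: List.replicate k a) = _
          rw [evalFrom_cons, wstep_b_s0 (a := a)]
        rw [this, (evalFrom_replicate hab k).2] at hv
        by_cases h : Even k
        · rw [if_pos h] at hv
          have h' : WSt.s1 = WSt.s2 := hv
          exact absurd h' (by decide)
        · exact Nat.not_even_iff_odd.mp h
    | cons c u' =>
        exfalso
        have huv' : c :: (u' ++ v) = b :: List.replicate k a := huv
        have hcb : c = b ∧ u' ++ v = List.replicate k a := by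
          injection huv' with h1 h2
          exact ⟨h1, h2⟩
        have hva : ∀ x ∈ v, x = a := by
          intro x hx
          exact List.eq_of_mem_replicate (hcb.2 ▸ (List.mem_append.mpr (Or.inr hx)))
        have hvrep : v = List.replicate v.length a := List.eq_replicate_of_mem hva
        rw [hvrep] at hv
        cases hn : v.length with
        | zero =>
            rw [hn] at hv
            have h' : WSt.s0 = WSt.s2 := hv
            exact absurd h' (by decide)
        | succ m =>
            rw [hn, List.replicate_succ] at hv
            have heval : (wDFA b).eval (a :: List.replicate m a) = WSt.dead := by
              show (wDFA b).evalFrom WSt.s0 (a :: List.replicate m a) = _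
              rw [evalFrom_cons, wstep_a_s0 hab, evalFrom_dead]
            rw [heval] at hv
            have h' : WSt.dead = WSt.s2 := hv
            exact absurd h' (by decide)
  · rintro ⟨m, rfl⟩
    refine ⟨[], trivial, [b] ++ List.replicate (2 * m + 1) a, ?_, by simp⟩
    rw [← hacc]
    show ([b] ++ List.replicate (2 * m + 1) a : List α) ∈ (wDFA b).accepts
    rw [DFA.mem_accepts]
    have : [b] ++ List.replicate (2 * m + 1) a = b :: a :: List.replicate (2 * m) a := by
      rw [List.replicate_succ]; rfl
    show (wDFA b).evalFrom WSt.s0 _ ∈ _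
    rw [this, evalFrom_cons, wstep_b_s0 (a := a), evalFrom_cons, wstep_a_s1 hab,
      (evalFrom_replicate hab (2 * m)).1, if_pos (even_two_mul m)]
    rfl

end Aux

/-- Over the alphabet `{a, b}`, the language `⊤·{ba}{b}∗({aa}{b}∗)∗` is symmetric definite
but does not have the non-counting property. -/
theorem sydefWitness_symDef_not_nonCounting [Fintype α] (a b : α) (hab : a ≠ b)
    (hall : ∀ c : α, c = a ∨ c = b) :
    IsSymDef (sydefWitness a b) ∧
    (∀ k : ℕ, 1 ≤ k → ∃ x y z : List α,
      Xor' (x ++ wordPow y k ++ z ∈ sydefWitness a b)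
           (x ++ wordPow y (k + 1) ++ z ∈ sydefWitness a b)) := by
  constructor
  · refine ⟨⊤, ({[b, a]} : Language α) * ({[b]} : Language α)∗ *
      (({[a, a]} : Language α) * ({[b]} : Language α)∗)∗,
      top_regular, ⟨WSt, inferInstance, wDFA b, wDFA_accepts hab hall⟩, ?_⟩
    rw [top_mul_top]
    rfl
  · intro k hk
    refine ⟨[b], [a], [], ?_⟩
    rw [wordPow_single, wordPow_single]
    simp only [List.append_nil]
    rw [mem_sydefWitness_iff hab hall hk,
      mem_sydefWitness_iff hab hall (Nat.le_succ_of_le hk),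
      Nat.odd_iff, Nat.odd_iff]
    show (k % 2 = 1 ∧ ¬ k.succ % 2 = 1) ∨ (k.succ % 2 = 1 ∧ ¬ k % 2 = 1)
    omega
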